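/- The minimum ribbonlength among 3-stick folded ribbon unknots whose three folds all have the same type is 3√3, attained exactly when the triangular knot diagram is equilateral. -/

import Mathlib

theorem amgm3 (x y z : ℝ) (hx : 0 < x) (hy : 0 < y) (hz : 0 < z) :
    27 * (x * y * z) ≤ (x + y + z) ^ 3 := by
  nlinarith [mul_nonneg hx.le (sq_nonneg (y - z)), mul_nonneg hy.le (sq_nonneg (z - x)),
    mul_nonneg hz.le (sq_nonneg (x - y)), mul_nonneg (add_pos (add_pos hx hy) hz).le
      (add_nonneg (add_nonneg (sq_nonneg (x - y)) (sq_nonneg (y - z))) (sq_nonneg (z - x)))]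

theorem amgm3_eq (x y z : ℝ) (hx : 0 < x) (hy : 0 < y) (hz : 0 < z)
    (h : (x + y + z) ^ 3 = 27 * (x * y * z)) : x = y ∧ y = z := by
  have hT : 0 ≤ x * (y - z) ^ 2 + y * (z - x) ^ 2 + z * (x - y) ^ 2 := by positivity
  have hms : (x + y + z) * ((x - y) ^ 2 + (y - z) ^ 2 + (z - x) ^ 2) ≤ 0 := by
    nlinarith [h, hT]
  have hS : (x - y) ^ 2 + (y - z) ^ 2 + (z - x) ^ 2 ≤ 0 := by
    by_contra hcon
    push_neg at hcon
    nlinarith [mul_pos (add_pos (add_pos hx hy) hz) hcon]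
  constructor <;> nlinarith [sq_nonneg (x - y), sq_nonneg (y - z), sq_nonneg (z - x)]

/-- For a 3-stick folded ribbon unknot with all three folds of the same type, the maximal
allowed width is twice the inradius `r` of the triangular diagram, so the ribbonlength is
`P/(2r)` where `P` is the perimeter.  For every triangle (side lengths `a b c`), with
`s` the semiperimeter, `A` the Heron area and `r = A/s` the inradius, one has
`P/(2r) ≥ 3√3`, with equality iff the triangle is equilateral. -/
theorem three_stick_unknot_min_ribbonlength (a b c : ℝ)
    (ha : 0 < a) (hb : 0 < b) (hc : 0 < c)
    (hab : a < b + c) (hbc : b < a + c) (hca : c < a + b)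
    (s A r : ℝ) (hs : s = (a + b + c) / 2)
    (hA : A = Real.sqrt (s * (s - a) * (s - b) * (s - c)))
    (hr : r = A / s) :
    3 * Real.sqrt 3 ≤ (a + b + c) / (2 * r) ∧
      ((a + b + c) / (2 * r) = 3 * Real.sqrt 3 ↔ a = b ∧ b = c) := by
  have hx : 0 < s - a := by rw [hs]; linarith
  have hy : 0 < s - b := by rw [hs]; linarith
  have hz : 0 < s - c := by rw [hs]; linarith
  have hspos : 0 < s := by rw [hs]; linarith
  have hprod : 0 < s * (s - a) * (s - b) * (s - c) := by positivity
  have hApos : 0 < A := by rw [hA]; exact Real.sqrt_pos.mpr hprod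
  have hA2 : A ^ 2 = s * (s - a) * (s - b) * (s - c) := by rw [hA, Real.sq_sqrt hprod.le]
  have hsum : (s - a) + (s - b) + (s - c) = s := by rw [hs]; ring
  have hkey : 27 * ((s - a) * (s - b) * (s - c)) ≤ s ^ 3 := by
    have := amgm3 (s - a) (s - b) (s - c) hx hy hz
    rwa [hsum] at this
  have hval : (a + b + c) / (2 * r) = s ^ 2 / A := by
    rw [hr, show a + b + c = 2 * s by rw [hs]; ring]
    field_simp
  have h27 : Real.sqrt 27 = 3 * Real.sqrt 3 := by
    rw [show (27:ℝ) = 3 ^ 2 * 3 by norm_num, Real.sqrt_mul (by positivity),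
      Real.sqrt_sq (by norm_num)]
  have hmulA : 3 * Real.sqrt 3 * A = Real.sqrt (27 * A ^ 2) := by
    rw [Real.sqrt_mul (by norm_num), Real.sqrt_sq hApos.le, h27]
  have hsq4 : Real.sqrt (s ^ 4) = s ^ 2 := by
    rw [show s ^ 4 = (s ^ 2) ^ 2 by ring, Real.sqrt_sq (sq_nonneg s)]
  have hle4 : 27 * A ^ 2 ≤ s ^ 4 := by
    rw [hA2]
    calc 27 * (s * (s - a) * (s - b) * (s - c)) = s * (27 * ((s - a) * (s - b) * (s - c))) := by
          ring
      _ ≤ s * s ^ 3 := mul_le_mul_of_nonneg_left hkey hspos.le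
      _ = s ^ 4 := by ring
  constructor
  · rw [hval, le_div_iff₀ hApos, hmulA]
    calc Real.sqrt (27 * A ^ 2) ≤ Real.sqrt (s ^ 4) := Real.sqrt_le_sqrt hle4
      _ = s ^ 2 := hsq4
  · rw [hval]
    constructor
    · intro h
      have h1 : s ^ 2 = 3 * Real.sqrt 3 * A := by
        rw [div_eq_iff (ne_of_gt hApos)] at h
        linarith
      have hrt : (Real.sqrt 3) ^ 2 = 3 := Real.sq_sqrt (by norm_num)
      have h2 : s ^ 4 = 27 * A ^ 2 := by
        linear_combination (s ^ 2 + 3 * Real.sqrt 3 * A) * h1 + 9 * A ^ 2 * hrt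
      have h3 : s ^ 3 = 27 * ((s - a) * (s - b) * (s - c)) := by
        rw [hA2] at h2
        exact mul_left_cancel₀ (ne_of_gt hspos)
          (show s * s ^ 3 = s * (27 * ((s - a) * (s - b) * (s - c))) by linear_combination h2)
      have heq := amgm3_eq (s - a) (s - b) (s - c) hx hy hz (by rw [hsum]; exact h3)
      exact ⟨by linarith [heq.1], by linarith [heq.2]⟩
    · rintro ⟨rfl, rfl⟩
      have h3 : s ^ 3 = 27 * ((s - a) * (s - a) * (s - a)) := by
        rw [hs]; ring
      have h2 : s ^ 4 = 27 * A ^ 2 := by rw [hA2]; linear_combination s * h3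
      have hfin : s ^ 2 = 3 * Real.sqrt 3 * A := by rw [hmulA, ← hsq4, h2]
      rw [hfin]
      field_simp
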